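/- Let Q = u₀u₁⋯u_ℓ be a path in a graph G, let e be an edge of Q, and let 0 ≤ i ≤ ℓ−1 with u_i u_{i+1} ≠ e and u_ℓ u_i ∈ E(G). Then the graph (Q − u_i u_{i+1}) + u_ℓ u_i is a path from u₀ to u_{i+1} that contains the edge e and has the same vertex set as Q. -/

import Mathlib

open SimpleGraph

namespace SimpleGraph.Walk
variable {V : Type*} {G : SimpleGraph V}

/-- The walk consisting of the first `n` darts of `p`. -/
def take' {u v : V} : (p : G.Walk u v) → (n : ℕ) → G.Walk u (p.getVert n)
  | .nil, _ => .nil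
  | .cons h q, 0 => (Walk.nil).copy rfl (getVert_zero (.cons h q)).symm
  | .cons h q, n + 1 => Walk.cons h (take' q n)

lemma take'_append_drop {u v : V} (p : G.Walk u v) (n : ℕ) :
    (p.take' n).append (p.drop n) = p := by
  induction p generalizing n with
  | nil => simp [take', drop]
  | cons h q ih =>
    cases n with
    | zero => simp [take', drop]
    | succ n => simp [take', drop, ih]

lemma drop_eq_cons {u v : V} (p : G.Walk u v) {i : ℕ} (hi : i < p.length) :
    p.drop i = Walk.cons (p.adj_getVert_succ hi) (p.drop (i + 1)) := by
  induction p generalizing i with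
  | nil => simp at hi
  | cons h q ih =>
    cases i with
    | zero =>
      simp only [drop, copy_rfl_rfl]
      cases q <;> rfl
    | succ i =>
      simp only [drop, copy_rfl_rfl]
      exact ih (by simpa using hi)

end SimpleGraph.Walk

/-- Pósa rotation. Let `Q = u₀u₁⋯u_ℓ` be a path in `G`, `e ∈ E(Q)`,
`0 ≤ i ≤ ℓ−1` with `u_i u_{i+1} ≠ e` and `u_ℓ u_i ∈ E(G)`. Then
`(Q − u_i u_{i+1}) + u_ℓ u_i` is a path from `u₀` to `u_{i+1}` containing `e`, with the
same vertex set as `Q`. -/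
theorem stmt6 {V : Type*} [DecidableEq V] (G : SimpleGraph V) {u₀ uℓ : V}
    (w : G.Walk u₀ uℓ) (hw : w.IsPath) (e : Sym2 V) (he : e ∈ w.edges)
    (i : ℕ) (hi : i + 1 ≤ w.length)
    (hne : s(w.getVert i, w.getVert (i + 1)) ≠ e)
    (hadj : G.Adj uℓ (w.getVert i)) :
    ∃ w' : G.Walk u₀ (w.getVert (i + 1)), w'.IsPath ∧ e ∈ w'.edges ∧
      {v | v ∈ w'.support} = {v | v ∈ w.support} ∧
      {e' | e' ∈ w'.edges} =
        insert s(uℓ, w.getVert i)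
          ({e' | e' ∈ w.edges} \ {s(w.getVert i, w.getVert (i + 1))}) := by
  have hi' : i < w.length := hi
  set t : G.Walk u₀ (w.getVert i) := w.take' i with ht
  set d : G.Walk (w.getVert (i + 1)) uℓ := w.drop (i + 1) with hd
  have hdecomp : w = t.append (Walk.cons (w.adj_getVert_succ hi') d) := by
    conv_lhs => rw [← w.take'_append_drop i]
    rw [w.drop_eq_cons hi']
  have hsupp : w.support = t.support ++ d.support := by
    conv_lhs => rw [hdecomp]
    simp [Walk.support_append]
  have hedges : w.edges = t.edges ++ s(w.getVert i, w.getVert (i + 1)) :: d.edges := by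
    conv_lhs => rw [hdecomp]
    simp [Walk.edges_append]
  have hsupp' : (t.append (Walk.cons hadj.symm d.reverse)).support
      = t.support ++ d.support.reverse := by
    simp [Walk.support_append, Walk.support_reverse]
  have hedges' : (t.append (Walk.cons hadj.symm d.reverse)).edges
      = t.edges ++ s(w.getVert i, uℓ) :: d.edges.reverse := by
    simp [Walk.edges_append, Walk.edges_reverse]
  have hnd : (t.support ++ d.support).Nodup := by rw [← hsupp]; exact hw.support_nodup
  have hnde : (t.edges ++ s(w.getVert i, w.getVert (i + 1)) :: d.edges).Nodup := by
    rw [← hedges]; exact hw.isTrail.edges_nodup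
  rw [List.nodup_append] at hnd
  rw [List.nodup_append, List.nodup_cons] at hnde
  refine ⟨t.append (Walk.cons hadj.symm d.reverse), ?_, ?_, ?_, ?_⟩
  · rw [Walk.isPath_def, hsupp', List.nodup_append]
    refine ⟨hnd.1, List.nodup_reverse.2 hnd.2.1, fun a ha b hb => hnd.2.2 a ha b (by simpa using hb)⟩
  · rw [hedges']
    rw [hedges] at he
    simp only [List.mem_append, List.mem_cons, List.mem_reverse] at he ⊢
    rcases he with h | h | h
    · exact Or.inl h
    · exact absurd h.symm hne
    · exact Or.inr (Or.inr h)
  · ext v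
    simp only [Set.mem_setOf_eq, hsupp', hsupp, List.mem_append, List.mem_reverse]
  · have hmid_t : s(w.getVert i, w.getVert (i + 1)) ∉ t.edges := fun h =>
      hnde.2.2 _ h _ (by simp) rfl
    have hmid_d : s(w.getVert i, w.getVert (i + 1)) ∉ d.edges := hnde.2.1.1
    ext e'
    simp only [Set.mem_setOf_eq, hedges', hedges, List.mem_append, List.mem_cons,
      List.mem_reverse, Set.mem_insert_iff, Set.mem_diff, Set.mem_singleton_iff]
    constructor
    · rintro (h | h | h)
      · exact Or.inr ⟨Or.inl h, fun he' => hmid_t (he' ▸ h)⟩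
      · exact Or.inl (h.trans (Sym2.eq_swap))
      · exact Or.inr ⟨Or.inr (Or.inr h), fun he' => hmid_d (he' ▸ h)⟩
    · rintro (h | ⟨h | h | h, hne'⟩)
      · exact Or.inr (Or.inl (h.trans Sym2.eq_swap))
      · exact Or.inl h
      · exact absurd h hne'
      · exact Or.inr (Or.inr h)
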